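/- The rank of the average mixing matrix M̂ = Σ_r E_r ∘ E_r equals the dimension of the ℝ-linear span of the matrices {Ψ(D_a) : a an index}, where D_a = e_a e_aᵀ. -/

import Mathlib

open Matrix BigOperators

/-- The projection `Ψ(M) = ∑ r, E r * M * E r` onto the commutant. -/
def Psi {n d : ℕ} (E : Fin d → Matrix (Fin n) (Fin n) ℝ)
    (M : Matrix (Fin n) (Fin n) ℝ) : Matrix (Fin n) (Fin n) ℝ :=
  ∑ r, E r * M * E r

lemma Psi_std_apply {n d : ℕ} (E : Fin d → Matrix (Fin n) (Fin n) ℝ) (a i j : Fin n) :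
    Psi E (Matrix.single a a (1 : ℝ)) i j = ∑ r, E r i a * E r a j := by
  unfold Psi
  rw [Matrix.sum_apply]
  refine Finset.sum_congr rfl fun r _ => ?_
  rw [Matrix.mul_assoc, Matrix.mul_apply]
  rw [Finset.sum_eq_single a]
  · rw [Matrix.single_mul_apply_same]
    ring
  · intro k _ hk
    rw [Matrix.single_mul_apply_of_ne (1 : ℝ) a a k j hk]
    ring
  · intro h; exact absurd (Finset.mem_univ a) h

/-- The rank of the average mixing matrix `M̂ = ∑ r, E r ⊙ E r` equals the dimension of
the span of the average states `Ψ(D_a)`, where `D_a = e_a e_aᵀ`. -/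
theorem rank_avg_mixing_eq_dim_span (n d : ℕ) (hn : 1 ≤ n)
    (A : Matrix (Fin n) (Fin n) ℝ) (hA : Aᵀ = A)
    (θ : Fin d → ℝ) (hθ : Function.Injective θ)
    (E : Fin d → Matrix (Fin n) (Fin n) ℝ)
    (hEsymm : ∀ r, (E r)ᵀ = E r)
    (hEidem : ∀ r, E r * E r = E r)
    (hEorth : ∀ r s, r ≠ s → E r * E s = 0)
    (hEsum : ∑ r, E r = 1)
    (hdecomp : A = ∑ r, θ r • E r) :
    (∑ r, E r ⊙ E r).rank =
      Module.finrank ℝ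
        (Submodule.span ℝ
          (Set.range fun a : Fin n => Psi E (Matrix.single a a (1 : ℝ)))) := by
  classical
  set B : Matrix (Fin n × Fin n) (Fin n) ℝ :=
    Matrix.of (fun p a => Psi E (Matrix.single a a (1 : ℝ)) p.1 p.2) with hB
  have hsymmE : ∀ (r : Fin d) (i j : Fin n), E r i j = E r j i := by
    intro r i j
    conv_lhs => rw [← hEsymm r]
    rfl
  -- key: the average mixing matrix is the Gram matrix Bᵀ * B
  have key : (∑ r, E r ⊙ E r) = Bᵀ * B := by
    ext a b
    rw [Matrix.mul_apply, Matrix.sum_apply]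
    have : ∀ p : Fin n × Fin n, Bᵀ a p * B p b
        = ∑ r, ∑ s, (E r p.1 a * E r a p.2) * (E s p.1 b * E s b p.2) := by
      intro p
      rw [Matrix.transpose_apply, hB]
      simp only [Matrix.of_apply, Psi_std_apply, Finset.sum_mul_sum]
    simp only [this]
    rw [Finset.sum_comm' (t' := Finset.univ) (s' := fun _ => Finset.univ)]
    · refine Finset.sum_congr rfl fun r _ => ?_
      rw [Finset.sum_comm' (t' := Finset.univ) (s' := fun _ => Finset.univ)]
      · rw [Finset.sum_eq_single r]
        · have h1 : (∑ p : Fin n × Fin n, (E r p.1 a * E r a p.2) * (E r p.1 b * E r b p.2))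
              = (∑ i, E r i a * E r i b) * (∑ j, E r a j * E r b j) := by
            rw [Fintype.sum_prod_type, Finset.sum_mul_sum]
            exact Finset.sum_congr rfl fun i _ => Finset.sum_congr rfl fun j _ => by ring
          have h2 : (∑ i, E r i a * E r i b) = E r a b := by
            have := Matrix.mul_apply (M := E r) (N := E r) (i := a) (k := b)
            rw [hEidem r] at this
            rw [this]
            exact Finset.sum_congr rfl fun i _ => by rw [hsymmE r i a]
          have h3 : (∑ j, E r a j * E r b j) = E r a b := by
            have := Matrix.mul_apply (M := E r) (N := E r) (i := a) (k := b)
            rw [hEidem r] at this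
            rw [this]
            exact Finset.sum_congr rfl fun j _ => by rw [hsymmE r j b]
          rw [h1, h2, h3, Matrix.hadamard_apply]
        · intro s _ hs
          have h1 : (∑ p : Fin n × Fin n, (E r p.1 a * E r a p.2) * (E s p.1 b * E s b p.2))
              = (∑ i, E r i a * E s i b) * (∑ j, E r a j * E s b j) := by
            rw [Fintype.sum_prod_type, Finset.sum_mul_sum]
            exact Finset.sum_congr rfl fun i _ => Finset.sum_congr rfl fun j _ => by ring
          have h2 : (∑ i, E r i a * E s i b) = 0 := by
            have hz : (E r * E s) a b = 0 := by rw [hEorth r s (Ne.symm hs)]; rfl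
            calc (∑ i, E r i a * E s i b) = ∑ i, E r a i * E s i b :=
                  Finset.sum_congr rfl fun i _ => by rw [hsymmE r i a]
              _ = (E r * E s) a b := (Matrix.mul_apply).symm
              _ = 0 := hz
          rw [h1, h2, zero_mul]
        · intro h; exact absurd (Finset.mem_univ r) h
      · intro x y; simp
    · intro x y; simp
  rw [key, Matrix.rank_transpose_mul_self, Matrix.rank_eq_finrank_span_cols]
  -- now compare spans under the curry equivalence
  let e : (Fin n × Fin n → ℝ) ≃ₗ[ℝ] Matrix (Fin n) (Fin n) ℝ :=
    LinearEquiv.curry ℝ ℝ (Fin n) (Fin n)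
  have hrange : e '' Set.range B.col
      = Set.range fun a : Fin n => Psi E (Matrix.single a a (1 : ℝ)) := by
    rw [← Set.range_comp]
    refine congrArg Set.range (funext fun a => ?_)
    ext i j
    rfl
  calc Module.finrank ℝ (Submodule.span ℝ (Set.range B.col))
      = Module.finrank ℝ ((Submodule.span ℝ (Set.range B.col)).map e.toLinearMap) :=
        ((Submodule.span ℝ (Set.range B.col)).equivMapOfInjective e.toLinearMap
          e.injective).finrank_eq
    _ = Module.finrank ℝ (Submodule.span ℝ
          (Set.range fun a : Fin n => Psi E (Matrix.single a a (1 : ℝ)))) := by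
        rw [Submodule.map_span, LinearEquiv.coe_coe, hrange]
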